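/- For every integer n ≥ 4, the graph K_n − e is not a TS_k-reconfiguration graph for any k ≥ 2. -/

import Mathlib

open SimpleGraph

/-- `I` is an independent (stable) set of `G`. -/
def IsIndep {V : Type*} (G : SimpleGraph V) (I : Finset V) : Prop :=
  ∀ u ∈ I, ∀ v ∈ I, ¬ G.Adj u v

/-- Vertices of the `TS_k`-reconfiguration graph: size-`k` independent sets of `G`. -/
abbrev TSVert {V : Type*} (G : SimpleGraph V) (k : ℕ) := {I : Finset V // I.card = k ∧ IsIndep G I}

/-- The `TS_k`-reconfiguration graph of `G`: size-`k` independent sets, adjacent iff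
`I \ J = {u}`, `J \ I = {v}` and `uv ∈ E(G)`. -/
def TSk {V : Type*} [DecidableEq V] (G : SimpleGraph V) (k : ℕ) : SimpleGraph (TSVert G k) :=
  SimpleGraph.fromRel (fun I J =>
    ∃ u v, (I : Finset V) \ (J : Finset V) = {u} ∧
      (J : Finset V) \ (I : Finset V) = {v} ∧ G.Adj u v)

/-- `K_n − e`: the complete graph on `n` vertices with one edge removed. -/
def KnMinusE (n : ℕ) (h : 4 ≤ n) : SimpleGraph (Fin n) :=
  (⊤ : SimpleGraph (Fin n)).deleteEdges {s((⟨0, by omega⟩ : Fin n), (⟨1, by omega⟩ : Fin n))}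

lemma tsk_adj_iff {V : Type*} [DecidableEq V] (G : SimpleGraph V) (k : ℕ) (I J : TSVert G k) :
    (TSk G k).Adj I J ↔ ∃ u v, (I : Finset V) \ (J : Finset V) = {u} ∧
      (J : Finset V) \ (I : Finset V) = {v} ∧ G.Adj u v := by
  constructor
  · rintro ⟨hne, (⟨u, v, h1, h2, h3⟩ | ⟨u, v, h1, h2, h3⟩)⟩
    · exact ⟨u, v, h1, h2, h3⟩
    · exact ⟨v, u, h2, h1, h3.symm⟩
  · rintro ⟨u, v, h1, h2, h3⟩
    refine ⟨?_, Or.inl ⟨u, v, h1, h2, h3⟩⟩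
    intro h
    rw [h] at h1
    simp at h1

lemma mem_char {V : Type*} [DecidableEq V] {A C : Finset V} {p q : V}
    (h1 : A \ C = {p}) (h2 : C \ A = {q}) :
    ∀ x, x ∈ A ↔ (x = p ∨ (x ∈ C ∧ x ≠ q)) := by
  intro x
  have hp : p ∈ A ∧ p ∉ C := by
    have := h1 ▸ Finset.mem_singleton_self p; rw [Finset.mem_sdiff] at this; exact this
  have hq : q ∈ C ∧ q ∉ A := by
    have := h2 ▸ Finset.mem_singleton_self q; rw [Finset.mem_sdiff] at this; exact this
  constructor
  · intro hx
    by_cases hxC : x ∈ C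
    · exact Or.inr ⟨hxC, fun he => hq.2 (he ▸ hx)⟩
    · left
      have : x ∈ A \ C := Finset.mem_sdiff.mpr ⟨hx, hxC⟩
      rw [h1] at this; exact Finset.mem_singleton.mp this
  · rintro (rfl | ⟨hxC, hxq⟩)
    · exact hp.1
    · by_contra hxA
      have : x ∈ C \ A := Finset.mem_sdiff.mpr ⟨hxC, hxA⟩
      rw [h2] at this; exact hxq (Finset.mem_singleton.mp this)

lemma key_lemma {V : Type*} [DecidableEq V] {G : SimpleGraph V} {k : ℕ}
    {C D A : TSVert G k} {u v : V}
    (hCD1 : (C : Finset V) \ (D : Finset V) = {u})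
    (hCD2 : (D : Finset V) \ (C : Finset V) = {v})
    (hAC : ∃ p q, (A : Finset V) \ (C : Finset V) = {p} ∧
      (C : Finset V) \ (A : Finset V) = {q} ∧ G.Adj p q)
    (hAD : ∃ p q, (A : Finset V) \ (D : Finset V) = {p} ∧
      (D : Finset V) \ (A : Finset V) = {q} ∧ G.Adj p q)
    (huv : G.Adj u v)
    (hAneC : A ≠ C) (hAneD : A ≠ D) :
    ∃ a, (A : Finset V) \ (C : Finset V) = {a} ∧ (C : Finset V) \ (A : Finset V) = {u} ∧
      (A : Finset V) \ (D : Finset V) = {a} ∧ (D : Finset V) \ (A : Finset V) = {v} ∧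
      G.Adj a u ∧ G.Adj a v := by
  obtain ⟨p, q, h1, h2, h3⟩ := hAC
  obtain ⟨p', q', h1', h2', h3'⟩ := hAD
  have chA : ∀ x, x ∈ (A : Finset V) ↔ (x = p ∨ (x ∈ (C : Finset V) ∧ x ≠ q)) := mem_char h1 h2
  have chA' : ∀ x, x ∈ (A : Finset V) ↔ (x = p' ∨ (x ∈ (D : Finset V) ∧ x ≠ q')) := mem_char h1' h2'
  have chD : ∀ x, x ∈ (D : Finset V) ↔ (x = v ∨ (x ∈ (C : Finset V) ∧ x ≠ u)) := mem_char hCD2 hCD1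
  have chC : ∀ x, x ∈ (C : Finset V) ↔ (x = u ∨ (x ∈ (D : Finset V) ∧ x ≠ v)) := mem_char hCD1 hCD2
  have hu : u ∈ (C : Finset V) ∧ u ∉ (D : Finset V) := by
    have := hCD1 ▸ Finset.mem_singleton_self u; rw [Finset.mem_sdiff] at this; exact this
  have hv : v ∈ (D : Finset V) ∧ v ∉ (C : Finset V) := by
    have := hCD2 ▸ Finset.mem_singleton_self v; rw [Finset.mem_sdiff] at this; exact this
  have hp : p ∈ (A : Finset V) ∧ p ∉ (C : Finset V) := by
    have := h1 ▸ Finset.mem_singleton_self p; rw [Finset.mem_sdiff] at this; exact this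
  have hq : q ∈ (C : Finset V) ∧ q ∉ (A : Finset V) := by
    have := h2 ▸ Finset.mem_singleton_self q; rw [Finset.mem_sdiff] at this; exact this
  have hp' : p' ∈ (A : Finset V) ∧ p' ∉ (D : Finset V) := by
    have := h1' ▸ Finset.mem_singleton_self p'; rw [Finset.mem_sdiff] at this; exact this
  have hq' : q' ∈ (D : Finset V) ∧ q' ∉ (A : Finset V) := by
    have := h2' ▸ Finset.mem_singleton_self q'; rw [Finset.mem_sdiff] at this; exact this
  by_cases hqu : q = u
  · subst hqu
    have hpv : p ≠ v := by
      intro h; subst h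
      exact hAneD (Subtype.ext (Finset.ext fun x => by rw [chA x, chD x]))
    have hpD : p ∉ (D : Finset V) := fun hpd => by
      rcases (chD p).mp hpd with h | h
      · exact hpv h
      · exact hp.2 h.1
    have eq1 : (A : Finset V) \ (D : Finset V) = {p} := by
      apply Finset.ext; intro x
      rw [Finset.mem_sdiff, Finset.mem_singleton, chA x, chD x]
      constructor
      · rintro ⟨h | ⟨hxC, hxu⟩, hnd⟩
        · exact h
        · exact absurd (Or.inr ⟨hxC, hxu⟩) hnd
      · rintro rfl
        exact ⟨Or.inl rfl, fun h => hpD ((chD _).mpr h)⟩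
    have eq2 : (D : Finset V) \ (A : Finset V) = {v} := by
      apply Finset.ext; intro x
      rw [Finset.mem_sdiff, Finset.mem_singleton, chD x, chA x]
      constructor
      · rintro ⟨h | ⟨hxC, hxu⟩, hna⟩
        · exact h
        · exact absurd (Or.inr ⟨hxC, hxu⟩) hna
      · rintro rfl
        refine ⟨Or.inl rfl, ?_⟩
        rintro (h | ⟨hvc, _⟩)
        · exact hpv h.symm
        · exact hv.2 hvc
    have hpp : p' = p := by
      have := eq1 ▸ h1'; exact Finset.singleton_inj.mp this.symm
    have hqv : q' = v := by
      have := eq2 ▸ h2'; exact Finset.singleton_inj.mp this.symm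
    exact ⟨p, h1, h2, eq1, eq2, h3, hpp ▸ hqv ▸ h3'⟩
  · have huA : u ∈ (A : Finset V) := (chA u).mpr (Or.inr ⟨hu.1, fun h => hqu h.symm⟩)
    by_cases hqv : q' = v
    · subst hqv
      have hup : u = p' := by
        rcases (chA' u).mp huA with h | h
        · exact h
        · exact absurd h.1 hu.2
      exfalso
      apply hAneC
      apply Subtype.ext; apply Finset.ext; intro x
      rw [chA' x, chC x, ← hup]
    · exfalso
      have hvA : v ∈ (A : Finset V) := (chA' v).mpr (Or.inr ⟨hv.1, fun h => hqv h.symm⟩)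
      exact A.2.2 u huA v hvA huv

lemma kn_adj (n : ℕ) (hn : 4 ≤ n) (x y : Fin n) : (KnMinusE n hn).Adj x y ↔
    x ≠ y ∧ ¬((x = ⟨0, by omega⟩ ∧ y = ⟨1, by omega⟩) ∨ (x = ⟨1, by omega⟩ ∧ y = ⟨0, by omega⟩)) := by
  rw [KnMinusE, SimpleGraph.deleteEdges_adj, SimpleGraph.top_adj]
  rw [Set.mem_singleton_iff, Sym2.eq_iff]

set_option maxHeartbeats 1600000 in
/-- For every `n ≥ 4`, the graph `K_n − e` is not a `TS_k`-reconfiguration graph for any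
`k ≥ 2`. -/
theorem stmt12 (n : ℕ) (hn : 4 ≤ n) (k : ℕ) (hk : 2 ≤ k) :
    ¬ ∃ (W : Type) (_ : Fintype W) (dW : DecidableEq W) (G : SimpleGraph W),
      Nonempty ((@TSk W dW G k) ≃g KnMinusE n hn) := by
  rintro ⟨W, _, dW, G, ⟨e⟩⟩
  set x0 : Fin n := ⟨0, by omega⟩ with hx0
  set x1 : Fin n := ⟨1, by omega⟩ with hx1
  set x2 : Fin n := ⟨2, by omega⟩ with hx2
  set x3 : Fin n := ⟨3, by omega⟩ with hx3
  have hne01 : x0 ≠ x1 := by simp [hx0, hx1, Fin.ext_iff]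
  have hne02 : x0 ≠ x2 := by simp [hx0, hx2, Fin.ext_iff]
  have hne03 : x0 ≠ x3 := by simp [hx0, hx3, Fin.ext_iff]
  have hne12 : x1 ≠ x2 := by simp [hx1, hx2, Fin.ext_iff]
  have hne13 : x1 ≠ x3 := by simp [hx1, hx3, Fin.ext_iff]
  have hne23 : x2 ≠ x3 := by simp [hx2, hx3, Fin.ext_iff]
  set A : TSVert G k := e.symm x0 with hA
  set B : TSVert G k := e.symm x1 with hB
  set C : TSVert G k := e.symm x2 with hC
  set D : TSVert G k := e.symm x3 with hD
  have hinj : Function.Injective e.symm := e.symm.toEquiv.injective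
  have hAB : A ≠ B := fun h => hne01 (hinj h)
  have hAC : A ≠ C := fun h => hne02 (hinj h)
  have hAD : A ≠ D := fun h => hne03 (hinj h)
  have hBC : B ≠ C := fun h => hne12 (hinj h)
  have hBD : B ≠ D := fun h => hne13 (hinj h)
  -- adjacency transfer
  have htr : ∀ x y : Fin n, (TSk G k).Adj (e.symm x) (e.symm y) ↔ (KnMinusE n hn).Adj x y :=
    fun x y => e.symm.map_adj_iff
  have adjCD : (TSk G k).Adj C D := (htr x2 x3).mpr ((kn_adj n hn x2 x3).mpr
    ⟨hne23, by rintro (⟨h, -⟩ | ⟨h, -⟩) <;> simp [hx2, Fin.ext_iff] at h⟩)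
  have adjAC : (TSk G k).Adj A C := (htr x0 x2).mpr ((kn_adj n hn x0 x2).mpr
    ⟨hne02, by rintro (⟨-, h⟩ | ⟨h, -⟩) <;> first | simp [hx2, Fin.ext_iff] at h | simp [hx0, Fin.ext_iff] at h⟩)
  have adjAD : (TSk G k).Adj A D := (htr x0 x3).mpr ((kn_adj n hn x0 x3).mpr
    ⟨hne03, by rintro (⟨-, h⟩ | ⟨h, -⟩) <;> first | simp [hx3, Fin.ext_iff] at h | simp [hx0, Fin.ext_iff] at h⟩)
  have adjBC : (TSk G k).Adj B C := (htr x1 x2).mpr ((kn_adj n hn x1 x2).mpr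
    ⟨hne12, by rintro (⟨h, -⟩ | ⟨-, h⟩) <;> first | simp [hx1, Fin.ext_iff] at h | simp [hx2, Fin.ext_iff] at h⟩)
  have adjBD : (TSk G k).Adj B D := (htr x1 x3).mpr ((kn_adj n hn x1 x3).mpr
    ⟨hne13, by rintro (⟨h, -⟩ | ⟨-, h⟩) <;> first | simp [hx1, Fin.ext_iff] at h | simp [hx3, Fin.ext_iff] at h⟩)
  have nadjAB : ¬ (TSk G k).Adj A B := fun h => by
    have := (kn_adj n hn x0 x1).mp ((htr x0 x1).mp h)
    exact this.2 (Or.inl ⟨rfl, rfl⟩)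
  -- get the slide between C and D
  obtain ⟨u, v, hCD1, hCD2, huv⟩ := (tsk_adj_iff G k C D).mp adjCD
  -- structure of A and B
  obtain ⟨a, hAC1, hCA1, hAD1, hDA1, hau, hav⟩ :=
    key_lemma hCD1 hCD2 ((tsk_adj_iff G k A C).mp adjAC) ((tsk_adj_iff G k A D).mp adjAD) huv hAC hAD
  obtain ⟨b, hBC1, hCB1, hBD1, hDB1, hbu, hbv⟩ :=
    key_lemma hCD1 hCD2 ((tsk_adj_iff G k B C).mp adjBC) ((tsk_adj_iff G k B D).mp adjBD) huv hBC hBD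
  have chA : ∀ x, x ∈ (A : Finset W) ↔ (x = a ∨ (x ∈ (C : Finset W) ∧ x ≠ u)) := mem_char hAC1 hCA1
  have chB : ∀ x, x ∈ (B : Finset W) ↔ (x = b ∨ (x ∈ (C : Finset W) ∧ x ≠ u)) := mem_char hBC1 hCB1
  have ha : a ∈ (A : Finset W) ∧ a ∉ (C : Finset W) := by
    have := hAC1 ▸ Finset.mem_singleton_self a; rw [Finset.mem_sdiff] at this; exact this
  have hb : b ∈ (B : Finset W) ∧ b ∉ (C : Finset W) := by
    have := hBC1 ▸ Finset.mem_singleton_self b; rw [Finset.mem_sdiff] at this; exact this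
  have hu : u ∈ (C : Finset W) ∧ u ∉ (A : Finset W) := by
    have := hCA1 ▸ Finset.mem_singleton_self u; rw [Finset.mem_sdiff] at this; exact this
  have hab : a ≠ b := by
    intro h; subst h
    exact hAB (Subtype.ext (Finset.ext fun x => by rw [chA x, chB x]))
  have hbA : b ∉ (A : Finset W) := fun h => by
    rcases (chA b).mp h with h' | h'
    · exact hab h'.symm
    · exact hb.2 h'.1
  have haB : a ∉ (B : Finset W) := fun h => by
    rcases (chB a).mp h with h' | h'
    · exact hab h'
    · exact ha.2 h'.1
  have eqAB : (A : Finset W) \ (B : Finset W) = {a} := by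
    apply Finset.ext; intro x
    rw [Finset.mem_sdiff, Finset.mem_singleton, chA x, chB x]
    constructor
    · rintro ⟨h | ⟨hxC, hxu⟩, hnb⟩
      · exact h
      · exact absurd (Or.inr ⟨hxC, hxu⟩) hnb
    · rintro rfl
      exact ⟨Or.inl rfl, fun h => haB ((chB _).mpr h)⟩
  have eqBA : (B : Finset W) \ (A : Finset W) = {b} := by
    apply Finset.ext; intro x
    rw [Finset.mem_sdiff, Finset.mem_singleton, chB x, chA x]
    constructor
    · rintro ⟨h | ⟨hxC, hxu⟩, hna⟩
      · exact h
      · exact absurd (Or.inr ⟨hxC, hxu⟩) hna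
    · rintro rfl
      exact ⟨Or.inl rfl, fun h => hbA ((chA _).mpr h)⟩
  have hnab : ¬ G.Adj a b := fun h =>
    nadjAB ((tsk_adj_iff G k A B).mpr ⟨a, b, eqAB, eqBA, h⟩)
  -- pick s ∈ C \ {u}
  have hCcard : (C : Finset W).card = k := C.2.1
  have hCerase : ((C : Finset W).erase u).Nonempty := by
    rw [← Finset.card_pos, Finset.card_erase_of_mem hu.1, hCcard]
    omega
  obtain ⟨s, hs⟩ := hCerase
  have hsC : s ∈ (C : Finset W) := Finset.mem_of_mem_erase hs
  have hsu : s ≠ u := Finset.ne_of_mem_erase hs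
  have hsA : s ∈ (A : Finset W) := (chA s).mpr (Or.inr ⟨hsC, hsu⟩)
  have hsB : s ∈ (B : Finset W) := (chB s).mpr (Or.inr ⟨hsC, hsu⟩)
  have hsa : s ≠ a := fun h => ha.2 (h ▸ hsC)
  have hsb : s ≠ b := fun h => hb.2 (h ▸ hsC)
  -- the extra independent set X
  set Xs : Finset W := insert a (insert b (((C : Finset W).erase u).erase s)) with hXs
  have memX : ∀ x, x ∈ Xs ↔ (x = a ∨ x = b ∨ (x ∈ (C : Finset W) ∧ x ≠ u ∧ x ≠ s)) := by
    intro x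
    simp only [hXs, Finset.mem_insert, Finset.mem_erase]
    tauto
  have hCsubA : ∀ x ∈ (C : Finset W), x ≠ u → x ∈ (A : Finset W) :=
    fun x hx hxu => (chA x).mpr (Or.inr ⟨hx, hxu⟩)
  have hCsubB : ∀ x ∈ (C : Finset W), x ≠ u → x ∈ (B : Finset W) :=
    fun x hx hxu => (chB x).mpr (Or.inr ⟨hx, hxu⟩)
  have hXcard : Xs.card = k := by
    rw [hXs]
    rw [Finset.card_insert_of_notMem, Finset.card_insert_of_notMem,
      Finset.card_erase_of_mem hs, Finset.card_erase_of_mem hu.1, hCcard]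
    · omega
    · intro h
      exact hb.2 (Finset.mem_of_mem_erase (Finset.mem_of_mem_erase h))
    · intro h
      rcases Finset.mem_insert.mp h with h | h
      · exact hab h
      · exact ha.2 (Finset.mem_of_mem_erase (Finset.mem_of_mem_erase h))
  have hXindep : IsIndep G Xs := by
    intro x hx y hy hadj
    rw [memX] at hx hy
    rcases hx with rfl | rfl | ⟨hxC, hxu, -⟩ <;> rcases hy with rfl | rfl | ⟨hyC, hyu, -⟩
    · exact G.irrefl hadj
    · exact hnab hadj
    · exact A.2.2 _ ha.1 _ (hCsubA _ hyC hyu) hadj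
    · exact hnab hadj.symm
    · exact G.irrefl hadj
    · exact B.2.2 _ hb.1 _ (hCsubB _ hyC hyu) hadj
    · exact A.2.2 _ (hCsubA _ hxC hxu) _ ha.1 hadj
    · exact B.2.2 _ (hCsubB _ hxC hxu) _ hb.1 hadj
    · exact C.2.2 _ hxC _ hyC hadj
  obtain ⟨X, hXcoe⟩ : ∃ X : TSVert G k, (X : Finset W) = Xs := ⟨⟨Xs, hXcard, hXindep⟩, rfl⟩
  have haX : a ∈ Xs := (memX a).mpr (Or.inl rfl)
  have hbX : b ∈ Xs := (memX b).mpr (Or.inr (Or.inl rfl))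
  have hsX : s ∉ Xs := fun h => by
    rcases (memX s).mp h with h' | h' | h'
    · exact hsa h'
    · exact hsb h'
    · exact h'.2.2 rfl
  have hXA : X ≠ A := fun h => hbA (by rw [← hXcoe, h] at hbX; exact hbX)
  have hXB : X ≠ B := fun h => haB (by rw [← hXcoe, h] at haX; exact haX)
  -- X is not adjacent to A
  have eqAX : (A : Finset W) \ Xs = {s} := by
    apply Finset.ext; intro x
    rw [Finset.mem_sdiff, Finset.mem_singleton, chA x, memX x]
    constructor
    · rintro ⟨h | ⟨hxC, hxu⟩, hnx⟩
      · exact absurd (Or.inl h) hnx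
      · by_contra hxs
        exact hnx (Or.inr (Or.inr ⟨hxC, hxu, hxs⟩))
    · rintro rfl
      refine ⟨Or.inr ⟨hsC, hsu⟩, fun h => hsX ((memX _).mpr h)⟩
  have eqXA : Xs \ (A : Finset W) = {b} := by
    apply Finset.ext; intro x
    rw [Finset.mem_sdiff, Finset.mem_singleton, memX x]
    constructor
    · rintro ⟨rfl | rfl | ⟨hxC, hxu, -⟩, hna⟩
      · exact absurd ha.1 hna
      · rfl
      · exact absurd (hCsubA _ hxC hxu) hna
    · rintro rfl
      exact ⟨Or.inr (Or.inl rfl), hbA⟩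
  have nadjAX : ¬ (TSk G k).Adj A X := by
    rw [tsk_adj_iff]
    rintro ⟨p, q, hpq1, hpq2, hpq3⟩
    rw [hXcoe] at hpq1 hpq2
    have hps : p = s := Finset.singleton_inj.mp (eqAX ▸ hpq1).symm
    have hqb : q = b := Finset.singleton_inj.mp (eqXA ▸ hpq2).symm
    subst hps; subst hqb
    exact B.2.2 _ hsB _ hb.1 hpq3
  -- transfer: e X is a vertex of KnMinusE non-adjacent to x0, distinct from x0 and x1
  have heX0 : e X ≠ x0 := fun h => hXA (by
    have : e.symm (e X) = e.symm x0 := by rw [h]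
    rwa [e.symm_apply_apply] at this)
  have heX1 : e X ≠ x1 := fun h => hXB (by
    have : e.symm (e X) = e.symm x1 := by rw [h]
    rwa [e.symm_apply_apply] at this)
  have : (KnMinusE n hn).Adj x0 (e X) := by
    rw [kn_adj]
    refine ⟨fun h => heX0 h.symm, ?_⟩
    rintro (⟨-, h⟩ | ⟨h, -⟩)
    · exact heX1 h
    · exact hne01 h
  apply nadjAX
  have := (htr x0 (e X)).mpr this
  rwa [e.symm_apply_apply] at this
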